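/- Let α_n → ∞, and let (x_n⁽¹⁾), (x_n⁽²⁾) ⊂ ℝ^{2N} satisfy −log|x_n⁽¹⁾ − x_n⁽²⁾|/α_n → a ∈ ℝ. Suppose (r_n) is bounded in L²(ℝ₊ × S^{2N−1}) with e^{i x_n⁽¹⁾·e^{α_n t}ω} r_n ⇀ 0 weakly in L², and e^{i x_n⁽²⁾·e^{α_n t}ω} r_n ⇀ Φ weakly in L². Then Φ(t,ω) = 0 for almost every t < a. -/

import Mathlib

open MeasureTheory Filter Metric Complex
open scoped ENNReal Topology NNReal ComplexConjugate

noncomputable section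

/-- `ℝ^{2N}`. -/
abbrev Esp (N : ℕ) := EuclideanSpace ℝ (Fin (2*N))

/-- the unit sphere `S^{2N-1}`. -/
abbrev sphereM (N : ℕ) := Metric.sphere (0 : Esp N) 1

/-- surface measure on the unit sphere. -/
def sphMeas (N : ℕ) : Measure (sphereM N) := (volume : Measure (Esp N)).toSphere

/-- measure on `ℝ₊ × S^{2N-1}`. -/
def muP (N : ℕ) : Measure (ℝ × sphereM N) :=
  ((volume : Measure ℝ).restrict (Set.Ioi 0)).prod (sphMeas N)

/-- Fourier transform `û(ξ) = ∫ e^{-ix·ξ} u(x) dx`. -/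
def fint {N : ℕ} (u : Esp N → ℂ) (ξ : Esp N) : ℂ :=
  ∫ x : Esp N, Complex.exp (-Complex.I * ((inner ℝ x ξ : ℝ) : ℂ)) * u x

/-- inverse Fourier transform `(2π)^{-2N} ∫ e^{ix·ξ} F(ξ) dξ`. -/
def invFint (N : ℕ) (F : Esp N → ℂ) (x : Esp N) : ℂ :=
  ((((2*Real.pi)^(2*N))⁻¹ : ℝ) : ℂ) *
    ∫ ξ : Esp N, Complex.exp (Complex.I * ((inner ℝ x ξ : ℝ) : ℂ)) * F ξ

/-- squared nonhomogeneous Sobolev `H^N` norm `∫ (1+|ξ|²)^N |û(ξ)|² dξ`. -/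
def sobNormSq (N : ℕ) (u : Esp N → ℂ) : ℝ :=
  ∫ ξ : Esp N, (1 + ‖ξ‖^2)^N * ‖fint u ξ‖^2

/-- `ω_{2N-1} = 2π^N/(N-1)!`, the surface measure of `S^{2N-1}`. -/
def omegaS (N : ℕ) : ℝ := 2 * Real.pi ^ N / (N-1).factorial

/-- `β_N = 2N π^{2N} 2^{2N} / ω_{2N-1}`. -/
def betaN (N : ℕ) : ℝ := 2 * N * Real.pi ^ (2*N) * 2 ^ (2*N) / omegaS N

/-- `C_N = (2π)^{-N} ω_{2N-1}^{-1/2}`. -/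
def CN (N : ℕ) : ℝ := ((2*Real.pi)^N)⁻¹ * (Real.sqrt (omegaS N))⁻¹

/-- `C̃_N = ω_{2N-1}^{1/2} (2π)^{-N}`. -/
def CtN (N : ℕ) : ℝ := Real.sqrt (omegaS N) * ((2*Real.pi)^N)⁻¹

/-- Luxemburg norm of the Orlicz space associated to `φ(s) = e^{s²}-1`. -/
def orliczNorm {d : ℕ} (u : EuclideanSpace ℝ (Fin d) → ℂ) : ℝ :=
  sInf {l : ℝ | 0 < l ∧
    (∫⁻ x, ENNReal.ofReal (Real.exp ((‖u x‖ / l)^2) - 1)) ≤ 1}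

/-- the `𝓑` norm: `sup_j (∫_S ∫_{2^j}^{2^{j+1}} |w(t,ω)|² dt dω)^{1/2}`. -/
def Bnorm (N : ℕ) (w : ℝ → Esp N → ℂ) : ℝ :=
  ⨆ j : ℤ, Real.sqrt (∫ ω : sphereM N,
    (∫ t in Set.Icc ((2:ℝ)^j) ((2:ℝ)^(j+1)), ‖w t (ω : Esp N)‖^2) ∂(sphMeas N))

/-- the modulation `e^{i x · e^{a t} ω}`. -/
def modPhase (N : ℕ) (x : Esp N) (a t : ℝ) (ω : sphereM N) : ℂ :=
  Complex.exp (Complex.I * ((inner ℝ x (Real.exp (a * t) • (ω : Esp N)) : ℝ) : ℂ))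

/-- the set `𝒫(r_n)` of weak `L²` limits of modulated subsequences. -/
def weakLimSet (N : ℕ) (α : ℕ → ℝ) (r : ℕ → ℝ → Esp N → ℂ) :
    Set (ℝ × sphereM N → ℂ) :=
  {H | MemLp H 2 (muP N) ∧ ∃ (x : ℕ → Esp N) (σ : ℕ → ℕ), StrictMono σ ∧
    ∀ g : ℝ × sphereM N → ℂ, MemLp g 2 (muP N) →
      Tendsto (fun k => ∫ p, modPhase N (x k) (α (σ k)) p.1 p.2 *
          r (σ k) p.1 (p.2 : Esp N) * conj (g p) ∂(muP N))
        atTop (𝓝 (∫ p, H p * conj (g p) ∂(muP N)))}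

/-- `η(r_n) = sup_{H ∈ 𝒫(r_n)} ‖H‖²_{L²}`. -/
def etaFn (N : ℕ) (α : ℕ → ℝ) (r : ℕ → ℝ → Esp N → ℂ) : ℝ :=
  sSup {c | ∃ H ∈ weakLimSet N α r, c = (eLpNorm H 2 (muP N)).toReal ^ 2}
/-- Orthogonality of profiles: if the remainder modulated along `x⁽¹⁾` converges
weakly to `0` while modulated along `x⁽²⁾` it converges weakly to `Φ`, and
`-log|x_n⁽¹⁾ - x_n⁽²⁾|/α_n → a`, then `Φ(t,ω) = 0` for a.e. `t < a`. -/
lemma norm_exp_I_mul (θ : ℝ) : ‖Complex.exp (Complex.I * (θ : ℂ))‖ = 1 := by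
  rw [Complex.norm_exp]
  simp

lemma norm_modPhase (N : ℕ) (x : Esp N) (a t : ℝ) (ω : sphereM N) :
    ‖modPhase N x a t ω‖ = 1 := norm_exp_I_mul _

lemma conj_modPhase_mul (N : ℕ) (x : Esp N) (a t : ℝ) (ω : sphereM N) :
    conj (modPhase N x a t ω) * modPhase N x a t ω = 1 := by
  rw [modPhase]
  generalize (inner ℝ x (Real.exp (a * t) • (ω : Esp N)) : ℝ) = θ
  rw [← Complex.exp_conj, ← Complex.exp_add]
  have : conj (Complex.I * (θ:ℂ)) + Complex.I * (θ:ℂ) = 0 := by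
    simp [Complex.conj_ofReal]
  rw [this, Complex.exp_zero]

lemma continuous_modPhase (N : ℕ) (x : Esp N) (a : ℝ) :
    Continuous fun p : ℝ × sphereM N => modPhase N x a p.1 p.2 := by
  unfold modPhase
  exact Complex.continuous_exp.comp <| continuous_const.mul <|
    Complex.continuous_ofReal.comp <| Continuous.inner continuous_const <|
      ((Real.continuous_exp.comp (continuous_const.mul continuous_fst)).smul
        (continuous_subtype_val.comp continuous_snd))

lemma modPhase_sub_le (N : ℕ) (x y : Esp N) (a t : ℝ) (ω : sphereM N)
    (h1 : ‖y - x‖ * Real.exp (a * t) ≤ 1) :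
    ‖modPhase N y a t ω - modPhase N x a t ω‖ ≤ 2 * (‖y - x‖ * Real.exp (a * t)) := by
  set s := Real.exp (a * t) with hs
  set θ₁ : ℝ := inner ℝ x (s • (ω : Esp N)) with hθ1
  set θ₂ : ℝ := inner ℝ y (s • (ω : Esp N)) with hθ2
  have hΔ : |θ₂ - θ₁| ≤ ‖y - x‖ * s := by
    have : θ₂ - θ₁ = inner ℝ (y - x) (s • (ω : Esp N)) := by
      rw [hθ1, hθ2, inner_sub_left]
    rw [this]
    calc |(inner ℝ (y - x) (s • (ω : Esp N)) : ℝ)| ≤ ‖y - x‖ * ‖s • (ω : Esp N)‖ :=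
          abs_real_inner_le_norm _ _
      _ = ‖y - x‖ * s := by
          rw [norm_smul, mem_sphere_zero_iff_norm.mp ω.2]
          simp [hs, Real.norm_eq_abs, abs_of_pos (Real.exp_pos _)]
  have key : modPhase N y a t ω - modPhase N x a t ω
      = modPhase N x a t ω * (Complex.exp (Complex.I * ((θ₂ - θ₁ : ℝ) : ℂ)) - 1) := by
    rw [modPhase, modPhase, mul_sub, mul_one, ← Complex.exp_add]
    rw [hθ1, hθ2, hs]
    push_cast
    ring_nf
  rw [key, norm_mul, norm_modPhase, one_mul]
  have habs : ‖Complex.I * ((θ₂ - θ₁ : ℝ) : ℂ)‖ = |θ₂ - θ₁| := by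
    rw [norm_mul, Complex.norm_I, one_mul, Complex.norm_real, Real.norm_eq_abs]
  have hle1 : ‖Complex.I * ((θ₂ - θ₁ : ℝ) : ℂ)‖ ≤ 1 := by
    rw [habs]; exact le_trans hΔ h1
  calc ‖Complex.exp (Complex.I * ((θ₂ - θ₁ : ℝ) : ℂ)) - 1‖
      ≤ 2 * ‖Complex.I * ((θ₂ - θ₁ : ℝ) : ℂ)‖ := Complex.norm_exp_sub_one_le hle1
    _ = 2 * |θ₂ - θ₁| := by rw [habs]
    _ ≤ 2 * (‖y - x‖ * s) := by linarith

lemma ofReal_norm_sq (z : ℂ) : ENNReal.ofReal (‖z‖ ^ 2) = (‖z‖₊ : ℝ≥0∞) ^ (2 : ℝ) := by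
  rw [← Real.rpow_natCast ‖z‖ 2, ← ENNReal.ofReal_rpow_of_nonneg (norm_nonneg z) (by norm_num),
    ofReal_norm, enorm_eq_nnnorm]
  norm_num

lemma lint_sq_le {β : Type*} [MeasurableSpace β] {μ : Measure β} {f : β → ℂ} {M : ℝ≥0∞}
    (h : eLpNorm f 2 μ ≤ M) : ∫⁻ p, (‖f p‖₊ : ℝ≥0∞) ^ (2 : ℝ) ∂μ ≤ M ^ (2 : ℝ) := by
  rw [eLpNorm_eq_lintegral_rpow_enorm_toReal two_ne_zero ENNReal.ofNat_ne_top] at h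
  simp only [ENNReal.toReal_ofNat, enorm_eq_nnnorm] at h
  have := ENNReal.rpow_le_rpow h (by norm_num : (0:ℝ) ≤ 2)
  rwa [← ENNReal.rpow_mul, one_div, inv_mul_cancel₀ (by norm_num : (2:ℝ) ≠ 0),
    ENNReal.rpow_one] at this
theorem stmt17 (N : ℕ) (hN : 1 ≤ N) (α : ℕ → ℝ) (hα0 : ∀ n, 0 < α n)
    (hα : Tendsto α atTop atTop)
    (x₁ x₂ : ℕ → Esp N) (hne : ∀ n, x₁ n ≠ x₂ n) (a : ℝ)
    (ha : Tendsto (fun n => -Real.log ‖x₁ n - x₂ n‖ / α n) atTop (𝓝 a))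
    (r : ℕ → ℝ × sphereM N → ℂ)
    (hbd : ∃ M : ℝ≥0∞, M < ⊤ ∧ ∀ n, eLpNorm (r n) 2 (muP N) ≤ M)
    (Φ : ℝ × sphereM N → ℂ) (hΦ : MemLp Φ 2 (muP N))
    (h1 : ∀ g : ℝ × sphereM N → ℂ, MemLp g 2 (muP N) →
      Tendsto (fun n => ∫ p, modPhase N (x₁ n) (α n) p.1 p.2 * r n p *
          conj (g p) ∂(muP N)) atTop (𝓝 0))
    (h2 : ∀ g : ℝ × sphereM N → ℂ, MemLp g 2 (muP N) →
      Tendsto (fun n => ∫ p, modPhase N (x₂ n) (α n) p.1 p.2 * r n p *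
          conj (g p) ∂(muP N)) atTop (𝓝 (∫ p, Φ p * conj (g p) ∂(muP N)))) :
    ∀ᵐ p ∂(muP N), p.1 < a → Φ p = 0 := by
  obtain ⟨M, hMlt, hM⟩ := hbd
  have key : ∀ b : ℝ, b < a → ∀ᵐ p ∂(muP N), p.1 < b → Φ p = 0 := by
    intro b hb
    set s : Set (ℝ × sphereM N) := {p | p.1 < b} with hsdef
    have hs : MeasurableSet s := measurable_fst measurableSet_Iio
    set g : ℝ × sphereM N → ℂ := s.indicator Φ with hgdef
    have hg : MemLp g 2 (muP N) := hΦ.indicator hs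
    -- δₙ and its convergence to 0
    set δ : ℕ → ℝ := fun n => ‖x₁ n - x₂ n‖ * Real.exp (α n * b) with hδdef
    have hδpos : ∀ n, 0 < δ n := fun n =>
      mul_pos (norm_pos_iff.mpr (sub_ne_zero.mpr (hne n))) (Real.exp_pos _)
    have hδeq : ∀ n, δ n = Real.exp (α n * (b - -Real.log ‖x₁ n - x₂ n‖ / α n)) := by
      intro n
      have hαn := (hα0 n).ne'
      have hd : (0:ℝ) < ‖x₁ n - x₂ n‖ := norm_pos_iff.mpr (sub_ne_zero.mpr (hne n))
      have he : α n * (b - -Real.log ‖x₁ n - x₂ n‖ / α n)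
          = Real.log ‖x₁ n - x₂ n‖ + α n * b := by
        field_simp
        ring
      rw [he, Real.exp_add, Real.exp_log hd]
    have hδ0 : Tendsto δ atTop (𝓝 0) := by
      have h1' : Tendsto (fun n => b - -Real.log ‖x₁ n - x₂ n‖ / α n) atTop (𝓝 (b - a)) :=
        tendsto_const_nhds.sub ha
      have h2' : Tendsto (fun n => α n * (b - -Real.log ‖x₁ n - x₂ n‖ / α n)) atTop atBot :=
        hα.atTop_mul_neg (by linarith) h1'
      rw [show δ = fun n => Real.exp (α n * (b - -Real.log ‖x₁ n - x₂ n‖ / α n)) from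
        funext hδeq]
      exact Real.tendsto_exp_atBot.comp h2'
    set S : ℝ≥0∞ := M ^ (2:ℝ) + (eLpNorm Φ 2 (muP N)) ^ (2:ℝ) with hSdef
    have hS_top : S ≠ ⊤ := by
      apply ENNReal.add_ne_top.mpr
      exact ⟨(ENNReal.rpow_lt_top_of_nonneg (by norm_num) hMlt.ne).ne,
        (ENNReal.rpow_lt_top_of_nonneg (by norm_num) hΦ.2.ne).ne⟩
    set D : ℝ := S.toReal with hDdef
    -- integrability transfer between the two modulations
    have hswap : ∀ (n : ℕ) (y z : ℕ → Esp N),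
        Integrable (fun p : ℝ × sphereM N =>
          modPhase N (y n) (α n) p.1 p.2 * r n p * conj (g p)) (muP N) →
        Integrable (fun p : ℝ × sphereM N =>
          modPhase N (z n) (α n) p.1 p.2 * r n p * conj (g p)) (muP N) := by
      intro n y z h
      have heq : (fun p : ℝ × sphereM N =>
            modPhase N (z n) (α n) p.1 p.2 * r n p * conj (g p))
          = fun p => (modPhase N (z n) (α n) p.1 p.2 * conj (modPhase N (y n) (α n) p.1 p.2))
            * (modPhase N (y n) (α n) p.1 p.2 * r n p * conj (g p)) := by
        funext p
        have hc1 := conj_modPhase_mul N (y n) (α n) p.1 p.2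
        linear_combination (-(modPhase N (z n) (α n) p.1 p.2 * r n p * conj (g p))) * hc1
      rw [heq]
      refine h.bdd_mul (c := 1) ?_ (Eventually.of_forall fun p => le_of_eq ?_)
      · exact ((continuous_modPhase N (z n) (α n)).mul
          (continuous_star.comp (continuous_modPhase N (y n) (α n)))).aestronglyMeasurable
      · rw [norm_mul, norm_modPhase, one_mul, RCLike.norm_conj, norm_modPhase]
    have hgm : AEMeasurable (fun p => ((‖g p‖₊ : ℝ≥0∞) ^ (2:ℝ))) (muP N) :=
      (ENNReal.continuous_rpow_const.measurable.comp_aemeasurable hg.aestronglyMeasurable.enorm)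
    -- the eventual quantitative bound
    have hbound : ∀ᶠ n in atTop,
        ‖(∫ p, modPhase N (x₂ n) (α n) p.1 p.2 * r n p * conj (g p) ∂(muP N))
          - (∫ p, modPhase N (x₁ n) (α n) p.1 p.2 * r n p * conj (g p) ∂(muP N))‖
          ≤ δ n * D := by
      filter_upwards [hδ0.eventually (eventually_le_nhds (by norm_num : (0:ℝ) < 1))]
        with n hδ1
      have hpoint : ∀ p : ℝ × sphereM N,
          ‖modPhase N (x₂ n) (α n) p.1 p.2 * r n p * conj (g p)
            - modPhase N (x₁ n) (α n) p.1 p.2 * r n p * conj (g p)‖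
          ≤ δ n * (‖r n p‖^2 + ‖g p‖^2) := by
        intro p
        by_cases hgp : g p = 0
        · rw [hgp]
          simp only [map_zero, mul_zero, sub_zero, norm_zero]
          have := hδpos n
          positivity
        · have hpb : p.1 < b := by
            by_contra hcon
            exact hgp (Set.indicator_of_notMem (by simpa [hsdef] using hcon) Φ)
          have hexp : ‖x₂ n - x₁ n‖ * Real.exp (α n * p.1) ≤ δ n := by
            rw [norm_sub_rev]
            exact mul_le_mul_of_nonneg_left (Real.exp_le_exp.mpr
              (mul_le_mul_of_nonneg_left hpb.le (hα0 n).le)) (norm_nonneg _)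
          have hphase := modPhase_sub_le N (x₁ n) (x₂ n) (α n) p.1 p.2
            (le_trans hexp hδ1)
          have hvu : modPhase N (x₂ n) (α n) p.1 p.2 * r n p * conj (g p)
              - modPhase N (x₁ n) (α n) p.1 p.2 * r n p * conj (g p)
              = (modPhase N (x₂ n) (α n) p.1 p.2 - modPhase N (x₁ n) (α n) p.1 p.2)
                * (r n p * conj (g p)) := by ring
          rw [hvu, norm_mul, norm_mul, RCLike.norm_conj]
          have h2δ : ‖modPhase N (x₂ n) (α n) p.1 p.2 - modPhase N (x₁ n) (α n) p.1 p.2‖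
              ≤ 2 * δ n := le_trans hphase (by linarith)
          nlinarith [norm_nonneg (r n p), norm_nonneg (g p),
            mul_nonneg (hδpos n).le (sq_nonneg (‖r n p‖ - ‖g p‖)),
            mul_nonneg (mul_nonneg (norm_nonneg (r n p)) (norm_nonneg (g p)))
              (sub_nonneg.mpr h2δ),
            norm_nonneg (modPhase N (x₂ n) (α n) p.1 p.2 - modPhase N (x₁ n) (α n) p.1 p.2)]
      by_cases hui : Integrable (fun p : ℝ × sphereM N =>
          modPhase N (x₁ n) (α n) p.1 p.2 * r n p * conj (g p)) (muP N)
      · have hvi := hswap n x₁ x₂ hui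
        rw [← integral_sub hvi hui]
        calc ‖∫ p, (modPhase N (x₂ n) (α n) p.1 p.2 * r n p * conj (g p)
              - modPhase N (x₁ n) (α n) p.1 p.2 * r n p * conj (g p)) ∂(muP N)‖
            ≤ (∫⁻ p, ENNReal.ofReal ‖modPhase N (x₂ n) (α n) p.1 p.2 * r n p * conj (g p)
              - modPhase N (x₁ n) (α n) p.1 p.2 * r n p * conj (g p)‖ ∂(muP N)).toReal :=
              norm_integral_le_lintegral_norm _
          _ ≤ (ENNReal.ofReal (δ n) * S).toReal := by
              apply ENNReal.toReal_mono (ENNReal.mul_ne_top ENNReal.ofReal_ne_top hS_top)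
              calc ∫⁻ p, ENNReal.ofReal ‖modPhase N (x₂ n) (α n) p.1 p.2 * r n p * conj (g p)
                  - modPhase N (x₁ n) (α n) p.1 p.2 * r n p * conj (g p)‖ ∂(muP N)
                  ≤ ∫⁻ p, ENNReal.ofReal (δ n) *
                      ((‖r n p‖₊ : ℝ≥0∞) ^ (2:ℝ) + (‖g p‖₊ : ℝ≥0∞) ^ (2:ℝ)) ∂(muP N) := by
                    apply lintegral_mono
                    intro p
                    calc ENNReal.ofReal ‖modPhase N (x₂ n) (α n) p.1 p.2 * r n p * conj (g p)
                        - modPhase N (x₁ n) (α n) p.1 p.2 * r n p * conj (g p)‖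
                        ≤ ENNReal.ofReal (δ n * (‖r n p‖^2 + ‖g p‖^2)) :=
                          ENNReal.ofReal_le_ofReal (hpoint p)
                      _ = ENNReal.ofReal (δ n) *
                          ((‖r n p‖₊ : ℝ≥0∞) ^ (2:ℝ) + (‖g p‖₊ : ℝ≥0∞) ^ (2:ℝ)) := by
                          rw [ENNReal.ofReal_mul (hδpos n).le,
                            ENNReal.ofReal_add (by positivity) (by positivity),
                            ofReal_norm_sq, ofReal_norm_sq]
                _ = ENNReal.ofReal (δ n) *
                      ∫⁻ p, ((‖r n p‖₊ : ℝ≥0∞) ^ (2:ℝ) + (‖g p‖₊ : ℝ≥0∞) ^ (2:ℝ)) ∂(muP N) :=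
                    lintegral_const_mul' _ _ ENNReal.ofReal_ne_top
                _ ≤ ENNReal.ofReal (δ n) * S := by
                    apply mul_le_mul_right
                    rw [lintegral_add_right' _ hgm]
                    exact add_le_add (lint_sq_le (hM n)) (lint_sq_le (eLpNorm_indicator_le Φ))
          _ = δ n * D := by
              rw [ENNReal.toReal_mul, ENNReal.toReal_ofReal (hδpos n).le]
      · have hvi : ¬ Integrable (fun p : ℝ × sphereM N =>
            modPhase N (x₂ n) (α n) p.1 p.2 * r n p * conj (g p)) (muP N) :=
          fun h => hui (hswap n x₂ x₁ h)
        rw [integral_undef hui, integral_undef hvi]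
        simpa using mul_nonneg (hδpos n).le ENNReal.toReal_nonneg
    have hF := h2 g hg
    have hG := h1 g hg
    have hdiff : Tendsto (fun n =>
        (∫ p, modPhase N (x₂ n) (α n) p.1 p.2 * r n p * conj (g p) ∂(muP N))
          - (∫ p, modPhase N (x₁ n) (α n) p.1 p.2 * r n p * conj (g p) ∂(muP N)))
        atTop (𝓝 0) :=
      squeeze_zero_norm' hbound (by simpa using hδ0.mul_const D)
    have hFten : Tendsto (fun n =>
        ∫ p, modPhase N (x₂ n) (α n) p.1 p.2 * r n p * conj (g p) ∂(muP N)) atTop (𝓝 0) := by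
      have := hdiff.add hG
      simpa using this
    have hL0 : ∫ p, Φ p * conj (g p) ∂(muP N) = 0 := tendsto_nhds_unique hF hFten
    have hging : (fun p => Φ p * conj (g p))
        = s.indicator fun p => ((Complex.normSq (Φ p) : ℝ) : ℂ) := by
      funext p
      by_cases hp : p ∈ s
      · simp [hgdef, Set.indicator_of_mem hp, Complex.mul_conj]
      · simp [hgdef, Set.indicator_of_notMem hp]
    rw [hging, integral_indicator hs] at hL0
    rw [show (∫ p in s, ((Complex.normSq (Φ p) : ℝ) : ℂ) ∂(muP N))
        = ((∫ p in s, Complex.normSq (Φ p) ∂(muP N) : ℝ) : ℂ) from integral_ofReal] at hL0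
    have hreal : ∫ p in s, Complex.normSq (Φ p) ∂(muP N) = 0 := by exact_mod_cast hL0
    have hint : Integrable (fun p => Complex.normSq (Φ p)) ((muP N).restrict s) := by
      have h2' : Integrable (fun p => ‖Φ p‖ ^ 2) (muP N) := hΦ.norm.integrable_sq
      have h3' : Integrable (fun p => Complex.normSq (Φ p)) (muP N) := by
        simpa [Complex.normSq_eq_norm_sq] using h2'
      exact h3'.restrict
    have hae := (integral_eq_zero_iff_of_nonneg
      (fun p => Complex.normSq_nonneg (Φ p)) hint).mp hreal
    have hae' : ∀ᵐ p ∂(muP N).restrict s, Φ p = 0 := by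
      filter_upwards [hae] with p hp
      exact Complex.normSq_eq_zero.mp (by simpa using hp)
    have := (ae_restrict_iff' hs).mp hae'
    filter_upwards [this] with p hp hpb
    exact hp hpb
  have hall : ∀ᵐ p ∂(muP N), ∀ k : ℕ, p.1 < a - ((k:ℝ)+1)⁻¹ → Φ p = 0 :=
    ae_all_iff.mpr fun k => key (a - ((k:ℝ)+1)⁻¹) (by
      have : (0:ℝ) < ((k:ℝ)+1)⁻¹ := by positivity
      linarith)
  filter_upwards [hall] with p hp hpa
  obtain ⟨k, hk⟩ := exists_nat_one_div_lt (by linarith : (0:ℝ) < a - p.1)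
  rw [one_div] at hk
  exact hp k (by linarith)
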